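/- For any finite context set X = {x_1,...,x_N} with a probability distribution ρ supported on at least d contexts, reward function μ with μ*(x_1) ≠ 0, there exists a d-dimensional realizable linear representation φ (i.e., μ(x,a) = φ(x,a)ᵀθ* for some θ* ∈ ℝ^d) such that λ_min(E_{x∼ρ}[φ*(x)φ*(x)ᵀ]) > 0 (the HLS condition). -/

import Mathlib

open Matrix

/-- Existence of a `d`-dimensional realizable HLS representation for any finite contextual
problem with at least `d` supported contexts and nonzero optimal reward at the first. -/
theorem stmt10 {d : ℕ} (hd : 0 < d) {X Act : Type*} [Fintype X] [Fintype Act]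
    (ρ : X → ℝ) (hρ0 : ∀ x, 0 ≤ ρ x) (hρ1 : ∑ x, ρ x = 1)
    (μ : X → Act → ℝ) (astar : X → Act) (hopt : ∀ x a, μ x a ≤ μ x (astar x))
    (xs : Fin d → X) (hinj : Function.Injective xs) (hsupp : ∀ i, 0 < ρ (xs i))
    (hne : μ (xs ⟨0, hd⟩) (astar (xs ⟨0, hd⟩)) ≠ 0) :
    ∃ (φ : X → Act → (Fin d → ℝ)) (θ : Fin d → ℝ),
      (∀ x a, μ x a = φ x a ⬝ᵥ θ) ∧
      (∑ x, ρ x • Matrix.vecMulVec (φ x (astar x)) (φ x (astar x))).PosDef := by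
  classical
  haveI : NeZero d := ⟨hd.ne'⟩
  have h0 : (⟨0, hd⟩ : Fin d) = 0 := rfl
  rw [h0] at hne
  set φ : X → Act → (Fin d → ℝ) :=
    fun x a j => if j = 0 then μ x a else if x = xs j then 1 else 0 with hφ
  refine ⟨φ, fun j => if j = 0 then 1 else 0, ?_, ?_⟩
  · intro x a
    simp [hφ, dotProduct, ite_and, mul_ite, Finset.sum_ite_eq']
  · set v : X → Fin d → ℝ := fun x => φ x (astar x) with hv
    -- dot product computation
    have hdot : ∀ (i : Fin d) (z : Fin d → ℝ),
        v (xs i) ⬝ᵥ z = μ (xs i) (astar (xs i)) * z 0 + (if i = 0 then 0 else z i) := by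
      intro i z
      have key : ∀ j : Fin d, v (xs i) j * z j =
          (if j = 0 then μ (xs i) (astar (xs i)) * z 0 else 0)
          + (if i ≠ 0 ∧ j = i then z i else 0) := by
        intro j
        simp only [hv, hφ]
        by_cases hj : j = 0
        · subst hj
          by_cases hi : i = 0
          · simp [hi]
          · simp [hi, eq_comm]
        · have : xs i = xs j ↔ i = j := ⟨fun h => hinj h, fun h => h ▸ rfl⟩
          by_cases hji : j = i
          · subst hji
            have hi : ¬ j = 0 := hj
            simp [hj, this, hi]
          · have hne' : xs i ≠ xs j := fun h => hji ((hinj h).symm)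
            simp [hj, hji, hne']
      simp only [dotProduct, key, Finset.sum_add_distrib, Finset.sum_ite_eq', Finset.mem_univ,
        if_true, ite_and]
      by_cases hi : i = 0 <;> simp [hi]
    rw [Matrix.posDef_iff_dotProduct_mulVec]
    constructor
    · -- IsHermitian
      apply Matrix.IsHermitian.ext
      intro i j
      simp only [Matrix.sum_apply, Matrix.smul_apply, Matrix.vecMulVec_apply, smul_eq_mul,
        Matrix.conjTranspose_apply, star_trivial]
      exact Finset.sum_congr rfl fun x _ => by ring
    · intro z hz
      have hquad : star z ⬝ᵥ ((∑ x, ρ x • Matrix.vecMulVec (v x) (v x)) *ᵥ z)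
          = ∑ x, ρ x * (v x ⬝ᵥ z) ^ 2 := by
        simp only [star_trivial, dotProduct, Matrix.mulVec, Matrix.sum_apply,
          Matrix.smul_apply, Matrix.vecMulVec_apply, smul_eq_mul, sq,
          Finset.sum_mul, Finset.mul_sum]
        conv_rhs => rw [Finset.sum_comm]
        refine Finset.sum_congr rfl fun i _ => ?_
        rw [Finset.sum_comm]
        exact Finset.sum_congr rfl fun x _ => Finset.sum_congr rfl fun j _ => by ring
      rw [hquad]
      have hnonneg : ∀ x ∈ Finset.univ (α := X), 0 ≤ ρ x * (v x ⬝ᵥ z) ^ 2 :=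
        fun x _ => mul_nonneg (hρ0 x) (sq_nonneg _)
      -- find positive term
      have hpos : ∃ x ∈ Finset.univ (α := X), 0 < ρ x * (v x ⬝ᵥ z) ^ 2 := by
        by_cases hz0 : z 0 = 0
        · obtain ⟨i, hi⟩ : ∃ i, z i ≠ 0 := Function.ne_iff.mp hz
          have hi0 : i ≠ 0 := fun h => hi (h ▸ hz0)
          refine ⟨xs i, Finset.mem_univ _, ?_⟩
          have : v (xs i) ⬝ᵥ z = z i := by rw [hdot]; simp [hz0, hi0]
          exact mul_pos (hsupp i) (by rw [this]; positivity)
        · refine ⟨xs 0, Finset.mem_univ _, ?_⟩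
          have : v (xs 0) ⬝ᵥ z = μ (xs 0) (astar (xs 0)) * z 0 := by rw [hdot]; simp
          exact mul_pos (hsupp 0) (by rw [this]; positivity)
      exact Finset.sum_pos' hnonneg hpos
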